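/- Every unitary correspondence isomorphism Φ : ₍f₎B → ₍g₎B between homomorphism correspondences equals M_u for a unique unitary multiplier u of B; consequently ₍f₎B ≅ ₍g₎B if and only if f and g are inner conjugate (g = Ad_u ∘ f for some unitary multiplier u). -/
import Mathlib


open scoped MultiplierAlgebra

variable {A B : Type*} [NonUnitalCStarAlgebra A] [NonUnitalCStarAlgebra B]

lemma faithful_left {c d : B} (h : ∀ y : B, c * y = d * y) : c = d := by
  have h2 : (c - d) * star (c - d) = 0 := by
    rw [sub_mul, h (star (c - d)), sub_self]
  exact sub_eq_zero.mp (CStarRing.mul_star_self_eq_zero_iff _ |>.mp h2)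

lemma faithful_right {c d : B} (h : ∀ y : B, y * c = y * d) : c = d := by
  have h2 : star (c - d) * (c - d) = 0 := by
    rw [mul_sub, h (star (c - d)), sub_self]
  exact sub_eq_zero.mp (CStarRing.star_mul_self_eq_zero_iff _ |>.mp h2)

/-- `Φ : ₍f₎B → ₍g₎B` is a unitary correspondence isomorphism between the homomorphism
correspondences `₍f₎B` (with left `A`-action via `f`, right Hilbert `B`-module structure with
inner product `⟨b,b'⟩ = b* b'`) and `₍g₎B`. -/
def IsUnitaryCorrIso (f g : A →⋆ₙₐ[ℂ] B) (Φ : B → B) : Prop :=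
  Function.Bijective Φ ∧ IsLinearMap ℂ Φ ∧
    (∀ b b' : B, Φ (b * b') = Φ b * b') ∧                 -- right `B`-module map
    (∀ b b' : B, star (Φ b) * Φ b' = star b * b') ∧       -- preserves the inner product
    (∀ (a : A) (b : B), Φ (f a * b) = g a * Φ b)          -- left `A`-module map

/-- Every unitary correspondence isomorphism `Φ : ₍f₎B → ₍g₎B` equals `M_u : b ↦ ub` for a unique
unitary multiplier `u` of `B`; consequently `₍f₎B ≅ ₍g₎B` if and only if `f` and `g` are inner
conjugate, i.e. `g = Ad_u ∘ f` for some unitary multiplier `u`. -/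
lemma exists_unitary (f g : A →⋆ₙₐ[ℂ] B) (Φ : B → B) (hΦ : IsUnitaryCorrIso f g Φ) :
    ∃ u : 𝓜(ℂ, B), u ∈ unitary 𝓜(ℂ, B) ∧ (∀ b, Φ b = u.fst b) ∧
      (∀ b, (star u).fst (Φ b) = b) := by
  obtain ⟨hbij, hlin, hmod, hinner, hleft⟩ := hΦ
  set e := Equiv.ofBijective Φ hbij with he
  set Ψ : B → B := ⇑e.symm with hΨ
  have hΨΦ : ∀ b, Ψ (Φ b) = b := fun b => e.symm_apply_apply b
  have hΦΨ : ∀ b, Φ (Ψ b) = b := fun b => e.apply_symm_apply b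
  have hnorm : ∀ b, ‖Φ b‖ = ‖b‖ := by
    intro b
    have h1 := congrArg norm (hinner b b)
    rw [CStarRing.norm_star_mul_self, CStarRing.norm_star_mul_self] at h1
    exact (mul_self_inj (norm_nonneg _) (norm_nonneg _)).mp h1
  have hΨnorm : ∀ b, ‖Ψ b‖ = ‖b‖ := fun b => by
    conv_rhs => rw [← hΦΨ b]
    rw [hnorm]
  have hΨadd : ∀ x y, Ψ (x + y) = Ψ x + Ψ y := by
    intro x y
    apply hbij.injective
    rw [hΦΨ, hlin.map_add, hΦΨ, hΦΨ]
  have hΨsmul : ∀ (c : ℂ) (x : B), Ψ (c • x) = c • Ψ x := by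
    intro c x
    apply hbij.injective
    rw [hΦΨ, hlin.map_smul, hΦΨ]
  let L : B →L[ℂ] B := LinearMap.mkContinuous (hlin.mk' Φ) 1
    (fun b => by rw [one_mul]; exact le_of_eq (hnorm b))
  let Rlin : B →ₗ[ℂ] B :=
    { toFun := fun x => star (Ψ (star x))
      map_add' := fun x y => by
        show star (Ψ (star (x + y))) = star (Ψ (star x)) + star (Ψ (star y))
        rw [star_add, hΨadd, star_add]
      map_smul' := fun c x => by
        show star (Ψ (star (c • x))) = (RingHom.id ℂ) c • star (Ψ (star x))
        rw [star_smul, hΨsmul, star_smul, star_star, RingHom.id_apply] }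
  let R : B →L[ℂ] B := LinearMap.mkContinuous Rlin 1
    (fun b => by
      simp only [Rlin, LinearMap.coe_mk, AddHom.coe_mk, one_mul]
      rw [norm_star, hΨnorm, norm_star])
  have central : ∀ x y : B, R x * y = x * L y := by
    intro x y
    have := hinner (Ψ (star x)) y
    rw [hΦΨ, star_star] at this
    exact this.symm
  set u : 𝓜(ℂ, B) := ⟨(L, R), central⟩ with hu
  refine ⟨u, ?_, fun b => rfl, ?_⟩
  · have hfst : ∀ b, u.fst b = Φ b := fun _ => rfl
    have hsnd : ∀ b, u.snd b = star (Ψ (star b)) := fun _ => rfl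
    rw [Unitary.mem_iff]
    constructor
    · refine DoubleCentralizer.ext _ _ _ _ (Prod.ext ?_ ?_) <;> ext b
      · show (star u * u).fst b = (1 : 𝓜(ℂ, B)).fst b
        rw [DoubleCentralizer.mul_fst, DoubleCentralizer.one_fst]
        show (star u).fst (Φ b) = b
        rw [DoubleCentralizer.star_fst, hsnd, star_star, star_star, hΨΦ]
      · show (star u * u).snd b = (1 : 𝓜(ℂ, B)).snd b
        rw [DoubleCentralizer.mul_snd, DoubleCentralizer.one_snd]
        show u.snd ((star u).snd b) = b
        rw [DoubleCentralizer.star_snd, hfst, hsnd, star_star, hΨΦ, star_star]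
    · refine DoubleCentralizer.ext _ _ _ _ (Prod.ext ?_ ?_) <;> ext b
      · show (u * star u).fst b = (1 : 𝓜(ℂ, B)).fst b
        rw [DoubleCentralizer.mul_fst, DoubleCentralizer.one_fst]
        show Φ ((star u).fst b) = b
        rw [DoubleCentralizer.star_fst, hsnd, star_star, star_star, hΦΨ]
      · show (u * star u).snd b = (1 : 𝓜(ℂ, B)).snd b
        rw [DoubleCentralizer.mul_snd, DoubleCentralizer.one_snd]
        show (star u).snd (u.snd b) = b
        rw [DoubleCentralizer.star_snd, hsnd, hfst, star_star, hΦΨ, star_star]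
  · intro b
    rw [DoubleCentralizer.star_fst]
    show star (star (Ψ (star (star (Φ b))))) = b
    rw [star_star, star_star, hΨΦ]

theorem isUnitaryCorrIso_eq_mul_left (f g : A →⋆ₙₐ[ℂ] B)
    (hf : Dense ((Submodule.span ℂ {x : B | ∃ a b, x = f a * b} : Submodule ℂ B) : Set B))
    (hg : Dense ((Submodule.span ℂ {x : B | ∃ a b, x = g a * b} : Submodule ℂ B) : Set B)) :
    (∀ Φ : B → B, IsUnitaryCorrIso f g Φ →
      ∃! u : 𝓜(ℂ, B), u ∈ unitary 𝓜(ℂ, B) ∧ ∀ b : B, Φ b = u.fst b) ∧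
    ((∃ Φ : B → B, IsUnitaryCorrIso f g Φ) ↔
      ∃ u ∈ unitary 𝓜(ℂ, B), ∀ (a : A) (b : B), g a * b = u.fst (f a * (star u).fst b)) := by
  constructor
  · intro Φ hΦ
    obtain ⟨u, hu, hufst, _⟩ := exists_unitary f g Φ hΦ
    refine ⟨u, ⟨hu, hufst⟩, ?_⟩
    rintro v ⟨hv, hvfst⟩
    refine DoubleCentralizer.ext _ _ _ _ (Prod.ext ?_ ?_)
    · ext b; rw [← hvfst b, hufst b]
    · ext x
      apply faithful_left
      intro y
      rw [v.central, u.central, ← hvfst y, hufst y]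
  · constructor
    · rintro ⟨Φ, hΦ⟩
      obtain ⟨u, hu, hufst, hustar⟩ := exists_unitary f g Φ hΦ
      refine ⟨u, hu, fun a b => ?_⟩
      obtain ⟨hbij, hlin, hmod, hinner, hleft⟩ := hΦ
      obtain ⟨b', rfl⟩ := hbij.surjective b
      rw [hustar, ← hufst, ← hleft]
    · rintro ⟨u, hu, huprop⟩
      obtain ⟨h1, h2⟩ := Unitary.mem_iff.mp hu
      have hinv1 : ∀ b : B, (star u).fst (u.fst b) = b := fun b => by
        have := congrArg (fun w : 𝓜(ℂ, B) => w.fst b) h1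
        simpa [DoubleCentralizer.mul_fst, DoubleCentralizer.one_fst] using this
      have hinv2 : ∀ b : B, u.fst ((star u).fst b) = b := fun b => by
        have := congrArg (fun w : 𝓜(ℂ, B) => w.fst b) h2
        simpa [DoubleCentralizer.mul_fst, DoubleCentralizer.one_fst] using this
      refine ⟨fun b => u.fst b, ?_, ?_, ?_, ?_, ?_⟩
      · exact Function.bijective_iff_has_inverse.mpr ⟨fun b => (star u).fst b, hinv1, hinv2⟩
      · exact ⟨fun x y => map_add _ x y, fun c x => map_smul _ c x⟩
      · intro b b'
        show u.fst (b * b') = u.fst b * b'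
        apply faithful_right
        intro y
        rw [← u.central, ← mul_assoc, u.central, mul_assoc]
      · intro b b'
        show star (u.fst b) * u.fst b' = star b * b'
        rw [← u.central (star (u.fst b)) b']
        have : u.snd (star (u.fst b)) = star b := by
          have h := DoubleCentralizer.star_fst u (u.fst b)
          rw [hinv1 b] at h
          rw [← star_star (u.snd (star (u.fst b))), ← h]
        rw [this]
      · intro a b
        show u.fst (f a * b) = g a * u.fst b
        have := huprop a (u.fst b)
        rw [hinv1 b] at this
        exact this.symm
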